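/- Let F = ℚ(t), ∂₂ : F³ → F⁴ given by the matrix [[-t,-1,0],[1,1,1],[0,-t,-1],[-1,0,-t]], and ∂₁ : F⁴ → F given by [1-t, 1-t², 1-t, 1-t]. Then the complex 0 → F³ → F⁴ → F → 0 is exact: ∂₂ is injective, ker ∂₁ = im ∂₂, and ∂₁ is surjective. -/
import Mathlib

/-- The generator `t` of the rational function field `ℚ(t)`. -/
noncomputable def t : RatFunc ℚ := RatFunc.X

/-- The boundary map `∂₂` of the Morse–Smale complex of the trefoil exterior. -/
noncomputable def D2 : Matrix (Fin 4) (Fin 3) (RatFunc ℚ) :=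
  !![-t, -1, 0; 1, 1, 1; 0, -t, -1; -1, 0, -t]

/-- The boundary map `∂₁`. -/
noncomputable def D1 : Matrix (Fin 1) (Fin 4) (RatFunc ℚ) :=
  !![1 - t, 1 - t ^ 2, 1 - t, 1 - t]

lemma aux_h1 : (1 - t : RatFunc ℚ) ≠ 0 := by
  have : (1 - t : RatFunc ℚ) = algebraMap (Polynomial ℚ) _ (1 - Polynomial.X) := by
    simp [t, RatFunc.algebraMap_X]
  rw [this]
  apply RatFunc.algebraMap_ne_zero
  intro h
  have := congrArg (Polynomial.coeff · 1) h
  simp [Polynomial.coeff_one, Polynomial.coeff_X] at this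

lemma aux_hd : (1 - t + t ^ 2 : RatFunc ℚ) ≠ 0 := by
  have : (1 - t + t ^ 2 : RatFunc ℚ)
      = algebraMap (Polynomial ℚ) _ (1 - Polynomial.X + Polynomial.X ^ 2) := by
    simp [t, RatFunc.algebraMap_X]
  rw [this]
  apply RatFunc.algebraMap_ne_zero
  intro h
  have := congrArg (Polynomial.coeff · 2) h
  simp [Polynomial.coeff_one, Polynomial.coeff_X] at this

/-- The complex `0 → ℚ(t)³ → ℚ(t)⁴ → ℚ(t) → 0` of the trefoil is exact. -/
theorem stmt_5 :
    Function.Injective D2.mulVecLin ∧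
    LinearMap.ker D1.mulVecLin = LinearMap.range D2.mulVecLin ∧
    Function.Surjective D1.mulVecLin := by
  refine ⟨?_, ?_, ?_⟩
  · rw [← LinearMap.ker_eq_bot, LinearMap.ker_eq_bot']
    intro v h
    have h0 := congrFun h 0
    have h1 := congrFun h 1
    have h2 := congrFun h 2
    simp [D2, Matrix.mulVecLin_apply, Matrix.mulVec, dotProduct,
      Fin.sum_univ_three] at h0 h1 h2
    have hv0 : v 0 = 0 := by
      have hz : (1 - t + t ^ 2) * v 0 = 0 := by linear_combination h1 + (1 - t) * h0 + h2
      exact (mul_eq_zero.mp hz).resolve_left aux_hd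
    have hv1 : v 1 = 0 := by linear_combination -h0 - t * hv0
    have hv2 : v 2 = 0 := by linear_combination -h2 - t * hv1
    funext i
    simp only [Pi.zero_apply]
    fin_cases i
    exacts [hv0, hv1, hv2]
  · ext x
    simp only [LinearMap.mem_ker, LinearMap.mem_range]
    constructor
    · intro hx
      have hc := congrFun hx 0
      simp [D1, Matrix.mulVecLin_apply, Matrix.mulVec, dotProduct,
        Fin.sum_univ_four] at hc
      have hsum : x 0 + (1 + t) * x 1 + x 2 + x 3 = 0 := by
        have hz : (1 - t) * (x 0 + (1 + t) * x 1 + x 2 + x 3) = 0 := by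
          linear_combination hc
        exact (mul_eq_zero.mp hz).resolve_left aux_h1
      refine ⟨![(x 0 * (1 - t) + x 1 + x 2) / (1 - t + t ^ 2),
                -(x 0 + t * x 1 + t * x 2) / (1 - t + t ^ 2),
                (t * x 0 + t ^ 2 * x 1 + (t - 1) * x 2) / (1 - t + t ^ 2)], ?_⟩
      funext i
      fin_cases i <;>
        simp [D2, Matrix.mulVecLin_apply, Matrix.mulVec, dotProduct,
          Fin.sum_univ_three] <;>
        field_simp [aux_hd]
      · ring
      · ring
      · ring
      · linear_combination (-(1 - t + t ^ 2)) * hsum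
    · rintro ⟨y, rfl⟩
      funext i
      fin_cases i
      simp [D1, D2, Matrix.mulVecLin_apply, Matrix.mulVec, dotProduct,
        Fin.sum_univ_four, Fin.sum_univ_three]
      ring
  · intro z
    refine ⟨![z 0 / (1 - t), 0, 0, 0], ?_⟩
    funext i
    fin_cases i
    simp [D1, Matrix.mulVecLin_apply, Matrix.mulVec, dotProduct, Fin.sum_univ_four]
    rw [← mul_div_assoc]
    exact mul_div_cancel_left₀ _ aux_h1
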